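/- Let φ : ℝ² → ℝ be given by a homogeneous polynomial of degree 4 with φ(u) > 0 for every u ≠ (0,0). For every ε > 0 there exists τ₀ > 0 such that for all τ ∈ (0, τ₀), writing D for the closed ball of radius ε about the origin of ℝ³: the set S₁ = {(x₁,x₂,x₃) ∈ D : φ(x₁,x₂) − x₃² + τ ≤ 0} has exactly two connected components, while the set S₂ = {(x₁,x₂,x₃) ∈ D : φ(x₁,x₂) − τ(x₁² + x₂²) − x₃² + τ³ ≤ 0} is connected and nonempty. -/

import Mathlib

open Metric Set MvPolynomial

noncomputable def mk3 (a b c : ℝ) : EuclideanSpace ℝ (Fin 3) := (WithLp.equiv 2 _).symm ![a, b, c]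

lemma mk3_apply0 (a b c : ℝ) : mk3 a b c 0 = a := rfl
lemma mk3_apply1 (a b c : ℝ) : mk3 a b c 1 = b := rfl
lemma mk3_apply2 (a b c : ℝ) : mk3 a b c 2 = c := rfl

lemma eq_mk3 (x : EuclideanSpace ℝ (Fin 3)) : x = mk3 (x 0) (x 1) (x 2) := by
  ext i; fin_cases i <;> rfl

lemma mem_ball3 {ε : ℝ} (hε : 0 ≤ ε) (x : EuclideanSpace ℝ (Fin 3)) :
    x ∈ closedBall (0 : EuclideanSpace ℝ (Fin 3)) ε ↔ x 0 ^ 2 + x 1 ^ 2 + x 2 ^ 2 ≤ ε ^ 2 := by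
  rw [mem_closedBall_zero_iff, EuclideanSpace.norm_eq, Fin.sum_univ_three]
  simp only [Real.norm_eq_abs, sq_abs]
  constructor
  · intro h
    have := Real.sq_sqrt (by positivity : (0:ℝ) ≤ x 0 ^ 2 + x 1 ^ 2 + x 2 ^ 2)
    nlinarith [Real.sqrt_nonneg (x 0 ^ 2 + x 1 ^ 2 + x 2 ^ 2)]
  · intro h
    have h2 : Real.sqrt (x 0 ^ 2 + x 1 ^ 2 + x 2 ^ 2) ≤ Real.sqrt (ε^2) := Real.sqrt_le_sqrt h
    rwa [Real.sqrt_sq hε] at h2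

lemma eval_smul_homog {P : MvPolynomial (Fin 2) ℝ} (hP : P.IsHomogeneous 4) (r : ℝ) (x : Fin 2 → ℝ) :
    MvPolynomial.eval (r • x) P = r ^ 4 * MvPolynomial.eval x P := by
  rw [MvPolynomial.eval_eq', MvPolynomial.eval_eq', Finset.mul_sum]
  apply Finset.sum_congr rfl
  intro d hd
  have hw := hP (MvPolynomial.mem_support_iff.mp hd)
  have hdeg : ∑ i, d i = 4 := by
    rw [Finsupp.weight_apply] at hw
    rw [← hw, Finsupp.sum_fintype] <;> simp
  have : ∏ i, (r • x) i ^ d i = r ^ 4 * ∏ i, x i ^ d i := by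
    simp only [Pi.smul_apply, smul_eq_mul, mul_pow]
    rw [Finset.prod_mul_distrib, Finset.prod_pow_eq_pow_sum, hdeg]
  rw [this]; ring

lemma joinedIn_mk3 {S : Set (EuclideanSpace ℝ (Fin 3))} {a b c : ℝ → ℝ}
    (ha : Continuous a) (hb : Continuous b) (hc : Continuous c)
    {p q : EuclideanSpace ℝ (Fin 3)}
    (hp : p = mk3 (a 0) (b 0) (c 0)) (hq : q = mk3 (a 1) (b 1) (c 1))
    (hmem : ∀ t, t ∈ Icc (0:ℝ) 1 → mk3 (a t) (b t) (c t) ∈ S) :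
    JoinedIn S p q := by
  subst hp hq
  have hcont : Continuous fun t : ℝ => mk3 (a t) (b t) (c t) := by
    apply (PiLp.continuous_toLp 2 (fun _ : Fin 3 => ℝ)).comp
    apply continuous_pi
    intro i
    fin_cases i
    · exact ha
    · exact hb
    · exact hc
  exact ⟨⟨⟨fun t => mk3 (a t) (b t) (c t), hcont.comp continuous_subtype_val⟩, rfl, rfl⟩,
    fun t => hmem t t.2⟩

set_option maxHeartbeats 2000000 in
/-- for a positive-definite homogeneous quartic `φ` on `ℝ²` and any `ε > 0`,
for all small enough `τ > 0`, the set `S₁ = {x ∈ D : φ(x₁,x₂) − x₃² + τ ≤ 0}` has exactly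
two connected components, while `S₂ = {x ∈ D : φ(x₁,x₂) − τ(x₁²+x₂²) − x₃² + τ³ ≤ 0}`
is connected and nonempty. -/
theorem stmt5 (φ : ℝ → ℝ → ℝ)
    (P : MvPolynomial (Fin 2) ℝ) (hP : P.IsHomogeneous 4)
    (hφP : ∀ u₁ u₂ : ℝ, φ u₁ u₂ = MvPolynomial.eval ![u₁, u₂] P)
    (hpos : ∀ u₁ u₂ : ℝ, (u₁, u₂) ≠ (0, 0) → 0 < φ u₁ u₂)
    (ε : ℝ) (hε : 0 < ε) :
    ∃ τ₀ > (0 : ℝ), ∀ τ ∈ Set.Ioo (0 : ℝ) τ₀,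
      Nat.card (ConnectedComponents
        {x : EuclideanSpace ℝ (Fin 3) //
          x ∈ Metric.closedBall (0 : EuclideanSpace ℝ (Fin 3)) ε ∧
          φ (x 0) (x 1) - (x 2) ^ 2 + τ ≤ 0}) = 2 ∧
      IsConnected {x : EuclideanSpace ℝ (Fin 3) |
          x ∈ Metric.closedBall (0 : EuclideanSpace ℝ (Fin 3)) ε ∧
          φ (x 0) (x 1) - τ * ((x 0) ^ 2 + (x 1) ^ 2) - (x 2) ^ 2 + τ ^ 3 ≤ 0} := by
  classical
  have hφ4 : ∀ s u v : ℝ, φ (s*u) (s*v) = s^4 * φ u v := by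
    intro s u v
    rw [hφP, hφP]
    have hv : (![s*u, s*v] : Fin 2 → ℝ) = s • ![u, v] := by
      funext i; fin_cases i <;> simp
    rw [hv, eval_smul_homog hP]
  have hφ0 : φ 0 0 = 0 := by
    have h := hφ4 0 0 0
    simpa using h
  have hφnn : ∀ u v : ℝ, 0 ≤ φ u v := by
    intro u v
    by_cases h : (u, v) = (0, 0)
    · rw [Prod.mk.injEq] at h
      rw [h.1, h.2, hφ0]
    · exact (hpos u v h).le
  set a := φ 1 0 with ha_def
  have ha : 0 < a := hpos 1 0 (by simp)
  refine ⟨min (min (ε^2) 1) (min ((4*a)⁻¹) (2*a*ε^2)), by positivity, ?_⟩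
  intro τ hτ
  obtain ⟨hτ0, hτub⟩ := hτ
  have hτε : τ < ε^2 := lt_of_lt_of_le hτub ((min_le_left _ _).trans (min_le_left _ _))
  have hτ1 : τ < 1 := lt_of_lt_of_le hτub ((min_le_left _ _).trans (min_le_right _ _))
  have hτa : τ < (4*a)⁻¹ := lt_of_lt_of_le hτub ((min_le_right _ _).trans (min_le_left _ _))
  have hτb : τ < 2*a*ε^2 := lt_of_lt_of_le hτub ((min_le_right _ _).trans (min_le_right _ _))
  constructor
  -- ==================== PART 1 : S₁ has two components ====================
  · set T := {x : EuclideanSpace ℝ (Fin 3) //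
        x ∈ Metric.closedBall (0 : EuclideanSpace ℝ (Fin 3)) ε ∧
        φ (x 0) (x 1) - (x 2) ^ 2 + τ ≤ 0} with hT
    have capConn : ∀ σ : ℝ, (σ = 1 ∨ σ = -1) →
        IsPreconnected {z : EuclideanSpace ℝ (Fin 3) |
          (z ∈ Metric.closedBall (0 : EuclideanSpace ℝ (Fin 3)) ε ∧
            φ (z 0) (z 1) - (z 2) ^ 2 + τ ≤ 0) ∧ 0 < σ * z 2} := by
      intro σ hσ
      have hσ2 : σ^2 = 1 := by rcases hσ with h | h <;> rw [h] <;> norm_num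
      have memC : ∀ u v w : ℝ, mk3 u v w ∈ {z : EuclideanSpace ℝ (Fin 3) |
          (z ∈ Metric.closedBall (0 : EuclideanSpace ℝ (Fin 3)) ε ∧
            φ (z 0) (z 1) - (z 2) ^ 2 + τ ≤ 0) ∧ 0 < σ * z 2} ↔
          ((u^2+v^2+w^2 ≤ ε^2 ∧ φ u v - w^2 + τ ≤ 0) ∧ 0 < σ * w) := by
        intro u v w
        rw [Set.mem_setOf_eq, mem_ball3 hε.le]
        simp only [mk3_apply0, mk3_apply1, mk3_apply2]
      have hpole : mk3 0 0 (σ*ε) ∈ {z : EuclideanSpace ℝ (Fin 3) |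
          (z ∈ Metric.closedBall (0 : EuclideanSpace ℝ (Fin 3)) ε ∧
            φ (z 0) (z 1) - (z 2) ^ 2 + τ ≤ 0) ∧ 0 < σ * z 2} := by
        rw [memC]
        refine ⟨⟨by nlinarith [sq_nonneg ε], ?_⟩, by nlinarith⟩
        rw [hφ0]
        nlinarith [sq_nonneg ε]
      apply IsConnected.isPreconnected
      apply IsPathConnected.isConnected
      refine ⟨mk3 0 0 (σ*ε), hpole, ?_⟩
      intro y hy
      apply JoinedIn.symm
      obtain ⟨u, v, w, rfl⟩ : ∃ u v w, y = mk3 u v w := ⟨y 0, y 1, y 2, eq_mk3 y⟩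
      rw [memC] at hy
      obtain ⟨⟨hball, hcond⟩, hsg⟩ := hy
      have hF : 0 ≤ φ u v := hφnn u v
      have hwε : σ*w ≤ ε := by nlinarith [sq_nonneg (ε - σ*w), sq_nonneg (ε + σ*w)]
      apply joinedIn_mk3 (a := fun t => (1-t)*u) (b := fun t => (1-t)*v)
        (c := fun t => (1-t)*w + t*(σ*ε)) (by fun_prop) (by fun_prop) (by fun_prop)
      · norm_num
      · norm_num
      · intro t ht
        obtain ⟨ht0, ht1⟩ := ht
        rw [memC]
        have hs0 : (0:ℝ) ≤ 1 - t := by linarith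
        have e0 : σ*((1-t)*w + t*(σ*ε)) = (1-t)*(σ*w) + t*(σ^2*ε) := by ring
        rw [hσ2, one_mul] at e0
        have hσc : σ*w ≤ σ*((1-t)*w + t*(σ*ε)) := by
          rw [e0]; nlinarith [mul_nonneg ht0 (sub_nonneg.2 hwε)]
        have hσc' : 0 < σ*((1-t)*w + t*(σ*ε)) := lt_of_lt_of_le hsg hσc
        have hc2 : w^2 ≤ ((1-t)*w + t*(σ*ε))^2 := by
          have h := mul_self_le_mul_self hsg.le hσc
          nlinarith [h, hσ2]
        refine ⟨⟨?_, ?_⟩, hσc'⟩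
        · have e1 : t^2*(σ*ε)^2 = t^2*ε^2 := by rw [mul_pow, hσ2, one_mul]
          have e2 : (1-t)*t*ε*(σ*w) ≤ (1-t)*t*ε*ε :=
            mul_le_mul_of_nonneg_left hwε (by positivity)
          have e3 : (1-t)^2*(u^2+v^2+w^2) ≤ (1-t)^2*ε^2 :=
            mul_le_mul_of_nonneg_left hball (sq_nonneg _)
          nlinarith [e1, e2, e3]
        · have h4 : φ ((1-t)*u) ((1-t)*v) = (1-t)^4 * φ u v := hφ4 (1-t) u v
          rw [h4]
          have h14 : (1-t)^4 ≤ 1 := pow_le_one₀ hs0 (by linarith)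
          nlinarith [mul_nonneg (sub_nonneg.2 h14) hF, hc2, hcond]
    have hpmem : ∀ σ : ℝ, σ = 1 ∨ σ = -1 →
        (mk3 0 0 (σ*ε) ∈ Metric.closedBall (0 : EuclideanSpace ℝ (Fin 3)) ε ∧
          φ (mk3 0 0 (σ*ε) 0) (mk3 0 0 (σ*ε) 1) - (mk3 0 0 (σ*ε) 2) ^ 2 + τ ≤ 0) := by
      intro σ hσ
      have hσ2 : σ^2 = 1 := by rcases hσ with h | h <;> rw [h] <;> norm_num
      constructor
      · rw [mem_ball3 hε.le, mk3_apply0, mk3_apply1, mk3_apply2]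
        nlinarith [sq_nonneg ε]
      · rw [mk3_apply0, mk3_apply1, mk3_apply2, hφ0]
        nlinarith [sq_nonneg ε]
    have hne : ∀ x : T, x.1 2 ≠ 0 := by
      intro x hx0
      have h2 := x.2.2
      rw [hx0] at h2
      have := hφnn (x.1 0) (x.1 1)
      nlinarith
    have hcoord : Continuous fun y : T => y.1 2 := by
      have h : Continuous fun z : EuclideanSpace ℝ (Fin 3) => z 2 :=
        (EuclideanSpace.proj (2 : Fin 3)).continuous
      exact h.comp continuous_subtype_val
    set f : T → Bool := fun x => decide (0 < x.1 2) with hf_def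
    have hlc : IsLocallyConstant f := by
      rw [IsLocallyConstant.iff_exists_open]
      intro x
      rcases lt_or_gt_of_ne (hne x) with hneg | hpos2
      · refine ⟨{y : T | y.1 2 < 0}, isOpen_Iio.preimage hcoord, hneg, ?_⟩
        intro y hy
        simp only [hf_def, decide_eq_decide]
        constructor
        · intro h; exact absurd hy (not_lt.2 h.le)
        · intro h; exact absurd hneg (not_lt.2 h.le)
      · refine ⟨{y : T | 0 < y.1 2}, isOpen_Ioi.preimage hcoord, hpos2, ?_⟩
        intro y hy
        simp only [hf_def, decide_eq_decide]
        exact ⟨fun _ => hpos2, fun _ => hy⟩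
    have hfc : Continuous f := hlc.continuous
    have key : ∀ σ : ℝ, (σ = 1 ∨ σ = -1) → ∀ x y : T,
        0 < σ * x.1 2 → 0 < σ * y.1 2 → connectedComponent x = connectedComponent y := by
      intro σ hσ x y hx hy
      have hA : IsPreconnected {y : T | 0 < σ * y.1 2} := by
        have himg : (Subtype.val '' {y : T | 0 < σ * y.1 2}) =
            {z : EuclideanSpace ℝ (Fin 3) |
              (z ∈ Metric.closedBall (0 : EuclideanSpace ℝ (Fin 3)) ε ∧
                φ (z 0) (z 1) - (z 2) ^ 2 + τ ≤ 0) ∧ 0 < σ * z 2} := by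
          ext z
          constructor
          · rintro ⟨y, hy, rfl⟩; exact ⟨y.2, hy⟩
          · rintro ⟨hz1, hz2⟩; exact ⟨⟨z, hz1⟩, hz2, rfl⟩
        have hC := capConn σ hσ
        rw [← himg] at hC
        exact Topology.IsInducing.subtypeVal.isPreconnected_image.mp hC
      have h1 : y ∈ connectedComponent x := hA.subset_connectedComponent hx hy
      exact connectedComponent_eq h1
    have hbij : Function.Bijective hfc.connectedComponentsLift := by
      constructor
      · intro A B hAB
        obtain ⟨x, rfl⟩ := ConnectedComponents.surjective_coe A
        obtain ⟨y, rfl⟩ := ConnectedComponents.surjective_coe B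
        rw [Continuous.connectedComponentsLift_apply_coe,
          Continuous.connectedComponentsLift_apply_coe] at hAB
        rw [ConnectedComponents.coe_eq_coe]
        have hiff : 0 < x.1 2 ↔ 0 < y.1 2 := by
          simpa [hf_def, decide_eq_decide] using hAB
        rcases lt_or_gt_of_ne (hne x) with hxneg | hxpos
        · have hyneg : y.1 2 < 0 := by
            rcases lt_or_gt_of_ne (hne y) with h | h
            · exact h
            · exact absurd hxneg (not_lt.2 (hiff.mpr h).le)
          exact key (-1) (Or.inr rfl) x y (by linarith) (by linarith)
        · exact key 1 (Or.inl rfl) x y (by linarith) (by linarith [hiff.mp hxpos])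
      · intro b
        cases b
        · refine ⟨(⟨mk3 0 0 ((-1)*ε), hpmem (-1) (Or.inr rfl)⟩ : T), ?_⟩
          rw [Continuous.connectedComponentsLift_apply_coe]
          simp only [hf_def, mk3_apply2]
          refine decide_eq_false ?_
          intro h
          linarith
        · refine ⟨(⟨mk3 0 0 (1*ε), hpmem 1 (Or.inl rfl)⟩ : T), ?_⟩
          rw [Continuous.connectedComponentsLift_apply_coe]
          simp only [hf_def, mk3_apply2]
          refine decide_eq_true ?_
          linarith
    calc Nat.card (ConnectedComponents T) = Nat.card Bool :=
          Nat.card_congr (Equiv.ofBijective _ hbij)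
      _ = 2 := by simp [Nat.card_eq_fintype_card]
  -- ==================== PART 2 : S₂ is connected ====================
  · have memS₂ : ∀ u v w : ℝ, (mk3 u v w ∈ {x : EuclideanSpace ℝ (Fin 3) |
          x ∈ Metric.closedBall (0 : EuclideanSpace ℝ (Fin 3)) ε ∧
          φ (x 0) (x 1) - τ * ((x 0) ^ 2 + (x 1) ^ 2) - (x 2) ^ 2 + τ ^ 3 ≤ 0}) ↔
        (u^2+v^2+w^2 ≤ ε^2 ∧ φ u v - τ*(u^2+v^2) - w^2 + τ^3 ≤ 0) := by
      intro u v w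
      rw [Set.mem_setOf_eq, mem_ball3 hε.le]
      simp only [mk3_apply0, mk3_apply1, mk3_apply2]
    have connect : ∀ σ : ℝ, (σ = 1 ∨ σ = -1) → ∀ x ∈ {x : EuclideanSpace ℝ (Fin 3) |
          x ∈ Metric.closedBall (0 : EuclideanSpace ℝ (Fin 3)) ε ∧
          φ (x 0) (x 1) - τ * ((x 0) ^ 2 + (x 1) ^ 2) - (x 2) ^ 2 + τ ^ 3 ≤ 0},
        0 ≤ σ * x 2 → JoinedIn {x : EuclideanSpace ℝ (Fin 3) |
          x ∈ Metric.closedBall (0 : EuclideanSpace ℝ (Fin 3)) ε ∧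
          φ (x 0) (x 1) - τ * ((x 0) ^ 2 + (x 1) ^ 2) - (x 2) ^ 2 + τ ^ 3 ≤ 0}
          x (mk3 0 0 (σ*ε)) := by
      intro σ hσ x hx hsx
      have hσ2 : σ^2 = 1 := by rcases hσ with h | h <;> rw [h] <;> norm_num
      obtain ⟨u, v, w, rfl⟩ : ∃ u v w, x = mk3 u v w := ⟨x 0, x 1, x 2, eq_mk3 x⟩
      rw [memS₂] at hx
      obtain ⟨hball, hcond⟩ := hx
      rw [mk3_apply2] at hsx
      have hF : 0 ≤ φ u v := hφnn u v
      have hρ : u^2+v^2 ≤ ε^2 := by nlinarith [sq_nonneg w]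
      have hβnn : 0 ≤ Real.sqrt (ε^2 - (u^2+v^2)) := Real.sqrt_nonneg _
      set β := Real.sqrt (ε^2 - (u^2+v^2)) with hβdef
      have hβ2 : β^2 = ε^2 - (u^2+v^2) := Real.sq_sqrt (by linarith)
      have hw2 : w^2 ≤ β^2 := by nlinarith
      have hσwβ : σ*w ≤ β := by nlinarith [sq_nonneg (β - σ*w), sq_nonneg (β + σ*w)]
      have step1 : JoinedIn {x : EuclideanSpace ℝ (Fin 3) |
          x ∈ Metric.closedBall (0 : EuclideanSpace ℝ (Fin 3)) ε ∧
          φ (x 0) (x 1) - τ * ((x 0) ^ 2 + (x 1) ^ 2) - (x 2) ^ 2 + τ ^ 3 ≤ 0}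
          (mk3 u v w) (mk3 u v (σ*β)) := by
        apply joinedIn_mk3 (a := fun _ => u) (b := fun _ => v)
          (c := fun t => (1-t)*w + t*(σ*β)) continuous_const continuous_const (by fun_prop)
        · norm_num
        · norm_num
        · intro t ht
          obtain ⟨ht0, ht1⟩ := ht
          rw [memS₂]
          have hs0 : (0:ℝ) ≤ 1 - t := by linarith
          have e0 : σ*((1-t)*w + t*(σ*β)) = (1-t)*(σ*w) + t*(σ^2*β) := by ring
          rw [hσ2, one_mul] at e0
          have hσc : σ*w ≤ σ*((1-t)*w + t*(σ*β)) := by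
            rw [e0]; nlinarith [mul_nonneg ht0 (sub_nonneg.2 hσwβ)]
          have hσcβ : σ*((1-t)*w + t*(σ*β)) ≤ β := by
            rw [e0]; nlinarith [mul_nonneg hs0 (sub_nonneg.2 hσwβ)]
          have hc2l : w^2 ≤ ((1-t)*w + t*(σ*β))^2 := by
            have h := mul_self_le_mul_self hsx hσc
            nlinarith [h, hσ2]
          have hc2u : ((1-t)*w + t*(σ*β))^2 ≤ β^2 := by
            have h := mul_self_le_mul_self (le_trans hsx hσc) hσcβ
            nlinarith [h, hσ2]
          constructor
          · nlinarith [hc2u, hβ2]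
          · nlinarith [hc2l, hcond]
      have step2 : JoinedIn {x : EuclideanSpace ℝ (Fin 3) |
          x ∈ Metric.closedBall (0 : EuclideanSpace ℝ (Fin 3)) ε ∧
          φ (x 0) (x 1) - τ * ((x 0) ^ 2 + (x 1) ^ 2) - (x 2) ^ 2 + τ ^ 3 ≤ 0}
          (mk3 u v (σ*β)) (mk3 0 0 (σ*ε)) := by
        apply joinedIn_mk3 (a := fun t => (1-t)*u) (b := fun t => (1-t)*v)
          (c := fun t => σ * Real.sqrt (ε^2 - (1-t)^2*(u^2+v^2)))
          (by fun_prop) (by fun_prop) (by fun_prop)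
        · rw [hβdef]; norm_num
        · norm_num [Real.sqrt_sq hε.le]
        · intro t ht
          obtain ⟨ht0, ht1⟩ := ht
          rw [memS₂]
          have hs0 : (0:ℝ) ≤ 1-t := by linarith
          have hs1 : (1:ℝ)-t ≤ 1 := by linarith
          have h12 : (1-t)^2 ≤ 1 := pow_le_one₀ hs0 hs1
          have h14 : (1-t)^4 ≤ 1 := pow_le_one₀ hs0 hs1
          have hρnn : (0:ℝ) ≤ u^2+v^2 := by positivity
          have hin : 0 ≤ ε^2 - (1-t)^2*(u^2+v^2) := by
            nlinarith [mul_le_mul_of_nonneg_right h12 hρnn]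
          have hσγ : (σ * Real.sqrt (ε^2 - (1-t)^2*(u^2+v^2)))^2
              = ε^2 - (1-t)^2*(u^2+v^2) := by
            rw [mul_pow, hσ2, one_mul, Real.sq_sqrt hin]
          have hcond2 : φ u v - τ*(u^2+v^2) - (ε^2 - (u^2+v^2)) + τ^3 ≤ 0 := by
            nlinarith [hball, hcond]
          have hφs : φ ((1-t)*u) ((1-t)*v) = (1-t)^4 * φ u v := hφ4 (1-t) u v
          constructor
          · nlinarith [hσγ]
          · rw [hφs]
            nlinarith [hσγ, hcond2, mul_nonneg (sub_nonneg.2 h14) hF,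
              mul_nonneg (mul_nonneg (sub_nonneg.2 h12) (by linarith : (0:ℝ) ≤ 1 - τ)) hρnn]
      exact step1.trans step2
    have hrnn : 0 ≤ τ/(2*a) := by positivity
    set r := Real.sqrt (τ/(2*a)) with hrdef
    have hr2 : r^2 = τ/(2*a) := Real.sq_sqrt hrnn
    have hx : 2*a*r^2 = τ := by rw [hr2, mul_comm, div_mul_cancel₀ τ (by positivity : (2*a) ≠ 0)]
    have h4a : 4*a*τ < 1 := by
      have h := mul_lt_mul_of_pos_left hτa (show (0:ℝ) < 4*a by positivity)
      rwa [mul_inv_cancel₀ (by positivity : (4*a) ≠ 0)] at h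
    have hq : mk3 r 0 0 ∈ {x : EuclideanSpace ℝ (Fin 3) |
          x ∈ Metric.closedBall (0 : EuclideanSpace ℝ (Fin 3)) ε ∧
          φ (x 0) (x 1) - τ * ((x 0) ^ 2 + (x 1) ^ 2) - (x 2) ^ 2 + τ ^ 3 ≤ 0} := by
      rw [memS₂]
      have hφr : φ r 0 = r^4 * a := by
        have h := hφ4 r 1 0
        rw [mul_one, mul_zero] at h
        rw [h, ha_def]
      constructor
      · nlinarith [hx, hτb, ha]
      · rw [hφr]
        have hx2 : 4*a^2*r^4 = τ^2 := by nlinarith [hx, sq_nonneg (2*a*r^2 - τ)]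
        have hx3 : τ*r^2 = 2*a*r^4 := by linear_combination (-(r^2)) * hx
        have hx4 : τ^3 = 4*a^2*r^4*τ := by linear_combination (-τ) * hx2
        have hr4 : (0:ℝ) ≤ a*r^4 := by positivity
        nlinarith [hx3, hx4, mul_nonneg hr4 (by linarith : (0:ℝ) ≤ 1 - 4*a*τ)]
    apply IsPathConnected.isConnected
    refine ⟨mk3 r 0 0, hq, ?_⟩
    intro y hy
    by_cases hs : 0 ≤ y 2
    · have h1 := connect 1 (Or.inl rfl) y hy (by linarith)
      have h2 := connect 1 (Or.inl rfl) (mk3 r 0 0) hq (by rw [mk3_apply2]; norm_num)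
      exact h2.trans h1.symm
    · push_neg at hs
      have h1 := connect (-1) (Or.inr rfl) y hy (by nlinarith)
      have h2 := connect (-1) (Or.inr rfl) (mk3 r 0 0) hq (by rw [mk3_apply2]; norm_num)
      exact h2.trans h1.symm
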